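/- The class of hybrid zonotopes is closed under generalized intersection: given hybrid zonotopes Z ⊆ ℝ^n and Y ⊆ ℝ^m with data (G_z^c, G_z^b, c_z, A_z^c, A_z^b, b_z) and (G_y^c, G_y^b, c_y, A_y^c, A_y^b, b_y), and a matrix R ∈ ℝ^{m×n}, the set Z ∩_R Y = {z ∈ Z : Rz ∈ Y} equals the hybrid zonotope with continuous generators [G_z^c 0], binary generators [G_z^b 0], center c_z, and constraints combining the constraints of Z, the constraints of Y, and the coupling constraint R G_z^c ξ_z^c + R G_z^b ξ_z^b − G_y^c ξ_y^c − G_y^b ξ_y^b = c_y − R c_z. -/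

import Mathlib

/-- The hybrid zonotope with generator matrices `Gc`, `Gb`, center `c`,
and constraint data `Ac`, `Ab`, `b` (Definition 2 of the paper). -/
def HybZono {n g bi nc : Type*} [Fintype g] [Fintype bi] [Fintype nc]
    (Gc : Matrix n g ℝ) (Gb : Matrix n bi ℝ) (c : n → ℝ)
    (Ac : Matrix nc g ℝ) (Ab : Matrix nc bi ℝ) (b : nc → ℝ) : Set (n → ℝ) :=
  {z | ∃ ξc : g → ℝ, ∃ ξb : bi → ℝ,
    (∀ i, |ξc i| ≤ 1) ∧ (∀ i, ξb i = 1 ∨ ξb i = -1) ∧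
    Ac.mulVec ξc + Ab.mulVec ξb = b ∧
    z = Gc.mulVec ξc + Gb.mulVec ξb + c}

/-- hybrid zonotopes are closed under generalized intersection. -/
theorem hybZono_generalized_intersection {n m ngz nbz ncz ngy nby ncy : ℕ}
    (Gzc : Matrix (Fin n) (Fin ngz) ℝ) (Gzb : Matrix (Fin n) (Fin nbz) ℝ) (cz : Fin n → ℝ)
    (Azc : Matrix (Fin ncz) (Fin ngz) ℝ) (Azb : Matrix (Fin ncz) (Fin nbz) ℝ) (bz : Fin ncz → ℝ)
    (Gyc : Matrix (Fin m) (Fin ngy) ℝ) (Gyb : Matrix (Fin m) (Fin nby) ℝ) (cy : Fin m → ℝ)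
    (Ayc : Matrix (Fin ncy) (Fin ngy) ℝ) (Ayb : Matrix (Fin ncy) (Fin nby) ℝ) (by' : Fin ncy → ℝ)
    (R : Matrix (Fin m) (Fin n) ℝ) :
    {z ∈ HybZono Gzc Gzb cz Azc Azb bz |
        R.mulVec z ∈ HybZono Gyc Gyb cy Ayc Ayb by'} =
      HybZono (Matrix.fromCols Gzc 0) (Matrix.fromCols Gzb 0) cz
        (Matrix.fromRows (Matrix.fromBlocks Azc 0 0 Ayc)
          (Matrix.fromCols (R * Gzc) (-Gyc)))
        (Matrix.fromRows (Matrix.fromBlocks Azb 0 0 Ayb)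
          (Matrix.fromCols (R * Gzb) (-Gyb)))
        (Sum.elim (Sum.elim bz by') (cy - R.mulVec cz)) := by
  ext z
  simp only [Set.mem_setOf_eq, HybZono, Set.mem_sep_iff]
  constructor
  · rintro ⟨⟨ξzc, ξzb, hzc, hzb, hAz, hz⟩, ξyc, ξyb, hyc, hyb, hAy, hy⟩
    refine ⟨Sum.elim ξzc ξyc, Sum.elim ξzb ξyb, ?_, ?_, ?_, ?_⟩
    · rintro (i | i)
      · simpa using hzc i
      · simpa using hyc i
    · rintro (i | i)
      · simpa using hzb i
      · simpa using hyb i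
    · ext (i | i)
      · cases i with
        | inl i =>
          have := congrFun hAz i
          simp only [Matrix.fromRows_mulVec, Matrix.fromBlocks_mulVec, Pi.add_apply,
            Sum.elim_inl, Sum.elim_inr, Sum.elim_comp_inl, Sum.elim_comp_inr,
            Matrix.zero_mulVec, Pi.zero_apply, add_zero, zero_add] at *
          linarith
        | inr i =>
          have := congrFun hAy i
          simp only [Matrix.fromRows_mulVec, Matrix.fromBlocks_mulVec, Pi.add_apply,
            Sum.elim_inl, Sum.elim_inr, Sum.elim_comp_inl, Sum.elim_comp_inr,
            Matrix.zero_mulVec, Pi.zero_apply, add_zero, zero_add] at *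
          linarith
      · have h1 := congrFun hy i
        have h2 : R.mulVec z i = R.mulVec (Gzc.mulVec ξzc + Gzb.mulVec ξzb + cz) i := by
          rw [hz]
        simp only [Matrix.fromRows_mulVec, Matrix.fromCols_mulVec_sumElim,
          Matrix.mulVec_add, Matrix.neg_mulVec, ← Matrix.mulVec_mulVec,
          Pi.add_apply, Sum.elim_inl, Sum.elim_inr, Pi.sub_apply, Pi.neg_apply] at *
        linarith
    · rw [hz]
      simp
  · rintro ⟨ξ, ξb, hc, hb, hA, hz⟩
    have hAz : Azc.mulVec (ξ ∘ Sum.inl) + Azb.mulVec (ξb ∘ Sum.inl) = bz := by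
      ext i
      have := congrFun hA (Sum.inl (Sum.inl i))
      simpa [Matrix.fromRows_mulVec, Matrix.fromBlocks_mulVec] using this
    have hAy : Ayc.mulVec (ξ ∘ Sum.inr) + Ayb.mulVec (ξb ∘ Sum.inr) = by' := by
      ext i
      have := congrFun hA (Sum.inl (Sum.inr i))
      simpa [Matrix.fromRows_mulVec, Matrix.fromBlocks_mulVec] using this
    have hcouple : ∀ i, (R * Gzc).mulVec (ξ ∘ Sum.inl) i - Gyc.mulVec (ξ ∘ Sum.inr) i
        + ((R * Gzb).mulVec (ξb ∘ Sum.inl) i - Gyb.mulVec (ξb ∘ Sum.inr) i)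
        = cy i - R.mulVec cz i := by
      intro i
      have := congrFun hA (Sum.inr i)
      have hsplit : (ξ : (Fin ngz ⊕ Fin ngy) → ℝ) = Sum.elim (ξ ∘ Sum.inl) (ξ ∘ Sum.inr) := by
        ext (j | j) <;> rfl
      have hsplitb : (ξb : (Fin nbz ⊕ Fin nby) → ℝ) =
          Sum.elim (ξb ∘ Sum.inl) (ξb ∘ Sum.inr) := by
        ext (j | j) <;> rfl
      rw [hsplit, hsplitb] at this
      simp only [Matrix.fromRows_mulVec, Matrix.fromCols_mulVec_sumElim,
        Matrix.neg_mulVec, Pi.add_apply, Sum.elim_inr, Pi.neg_apply, Pi.sub_apply] at this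
      linarith
    have hzeq : z = Gzc.mulVec (ξ ∘ Sum.inl) + Gzb.mulVec (ξb ∘ Sum.inl) + cz := by
      rw [hz]
      ext i
      simp [Matrix.mulVec, Matrix.fromCols, dotProduct, Fintype.sum_sum_type,
        Function.comp]
    refine ⟨⟨ξ ∘ Sum.inl, ξb ∘ Sum.inl, fun i => hc _, fun i => hb _, hAz, hzeq⟩,
      ξ ∘ Sum.inr, ξb ∘ Sum.inr, fun i => hc _, fun i => hb _, hAy, ?_⟩
    ext i
    have := hcouple i
    rw [hzeq]
    simp only [Matrix.mulVec_add, ← Matrix.mulVec_mulVec, Pi.add_apply] at *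
    linarith
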